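/- Every real symmetric 3×3 matrix with all diagonal entries equal to 1 and all off-diagonal entries ≤ −1 has exactly one negative eigenvalue and two positive eigenvalues (counted with multiplicity); that is, it is invertible with signature (2, 1). -/

import Mathlib

open Matrix Finset

lemma trace_eq_sum_eigs {A : Matrix (Fin 3) (Fin 3) ℝ} (hA : A.IsHermitian) :
    A.trace = ∑ i, hA.eigenvalues i := by
  conv_lhs => rw [hA.spectral_theorem]
  rw [Unitary.conjStarAlgAut_apply, Matrix.trace_mul_cycle, Unitary.coe_star_mul_self, Matrix.one_mul,
    Matrix.trace_diagonal]
  simp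

/-- **Three reflections always generate a Lorentzian group.**
Every real symmetric `3 × 3` matrix with diagonal entries `1` and off-diagonal entries
`≤ -1` is invertible and has exactly one negative eigenvalue and two positive
eigenvalues (with multiplicity), i.e. it has signature `(2, 1)`. -/
theorem lorentzian_three (A : Matrix (Fin 3) (Fin 3) ℝ)
    (hHerm : A.IsHermitian)
    (hdiag : ∀ i, A i i = 1)
    (hoff : ∀ i k, i ≠ k → A i k ≤ -1) :
    A.det ≠ 0 ∧
    (Finset.univ.filter fun k => hHerm.eigenvalues k < 0).card = 1 ∧
    (Finset.univ.filter fun k => 0 < hHerm.eigenvalues k).card = 2 := by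
  set e := hHerm.eigenvalues with he
  -- symmetry of entries
  have hsym : ∀ i j, A j i = A i j := by
    intro i j
    have := congrFun (congrFun hHerm i) j
    simpa [Matrix.conjTranspose_apply] using this
  set a := A 0 1 with ha
  set b := A 0 2 with hb
  set c := A 1 2 with hc
  have ha1 : a ≤ -1 := hoff 0 1 (by decide)
  have hb1 : b ≤ -1 := hoff 0 2 (by decide)
  have hc1 : c ≤ -1 := hoff 1 2 (by decide)
  -- determinant computation
  have hdet : A.det = 1 + 2 * (a * b * c) - a ^ 2 - b ^ 2 - c ^ 2 := by
    rw [Matrix.det_fin_three, hdiag, hdiag, hdiag, hsym 0 1, hsym 0 2, hsym 1 2]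
    ring
  have hdetneg : A.det < 0 := by
    rw [hdet]
    nlinarith [mul_nonneg (by linarith : (0:ℝ) ≤ -1 - a) (by linarith : (0:ℝ) ≤ -1 - b),
      mul_nonneg (mul_nonneg (by linarith : (0:ℝ) ≤ -1 - a) (by linarith : (0:ℝ) ≤ -1 - b))
        (by linarith : (0:ℝ) ≤ -1 - c), sq_nonneg (a + b), sq_nonneg (a - b), sq_nonneg (b + c),
      sq_nonneg (a + c)]
  -- determinant as product of eigenvalues
  have hprod : e 0 * e 1 * e 2 = A.det := by
    have := hHerm.det_eq_prod_eigenvalues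
    rw [Fin.prod_univ_three] at this
    simpa [he] using this.symm
  -- trace as sum of eigenvalues
  have hsum : e 0 + e 1 + e 2 = 3 := by
    have := trace_eq_sum_eigs hHerm
    rw [Fin.sum_univ_three] at this
    have htr : A.trace = 3 := by
      rw [Matrix.trace_fin_three, hdiag, hdiag, hdiag]; norm_num
    rw [htr] at this
    linarith [this]
  have hprodneg : e 0 * e 1 * e 2 < 0 := by rw [hprod]; exact hdetneg
  -- each eigenvalue nonzero
  have h0 : e 0 ≠ 0 := fun h => by rw [h] at hprodneg; simp at hprodneg
  have h1 : e 1 ≠ 0 := fun h => by rw [h] at hprodneg; simp at hprodneg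
  have h2 : e 2 ≠ 0 := fun h => by rw [h] at hprodneg; simp at hprodneg
  refine ⟨ne_of_lt hdetneg, ?_⟩
  -- sign case analysis: exactly one eigenvalue is negative
  rcases h0.lt_or_gt with p0 | p0 <;> rcases h1.lt_or_gt with p1 | p1 <;>
    rcases h2.lt_or_gt with p2 | p2
  · linarith
  · have := mul_pos (mul_pos_of_neg_of_neg p0 p1) p2; linarith
  · have := mul_pos_of_neg_of_neg (mul_neg_of_neg_of_pos p0 p1) p2; linarith
  · constructor
    · have : (Finset.univ.filter fun k => e k < 0) = {0} := by
        ext k; fin_cases k <;> simp [p0, p1, p2, not_lt.mpr (le_of_lt p1), not_lt.mpr (le_of_lt p2)]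
      rw [this]; rfl
    · have : (Finset.univ.filter fun k => 0 < e k) = {1, 2} := by
        ext k; fin_cases k <;> simp [not_lt.mpr (le_of_lt p0), p1, p2]
      rw [this]; rfl
  · have := mul_pos_of_neg_of_neg (mul_neg_of_pos_of_neg p0 p1) p2; linarith
  · constructor
    · have : (Finset.univ.filter fun k => e k < 0) = {1} := by
        ext k; fin_cases k <;> simp [p1, not_lt.mpr (le_of_lt p0), not_lt.mpr (le_of_lt p2)]
      rw [this]; rfl
    · have : (Finset.univ.filter fun k => 0 < e k) = {0, 2} := by
        ext k; fin_cases k <;> simp [p0, p2, not_lt.mpr (le_of_lt p1)]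
      rw [this]; rfl
  · constructor
    · have : (Finset.univ.filter fun k => e k < 0) = {2} := by
        ext k; fin_cases k <;> simp [p2, not_lt.mpr (le_of_lt p0), not_lt.mpr (le_of_lt p1)]
      rw [this]; rfl
    · have : (Finset.univ.filter fun k => 0 < e k) = {0, 1} := by
        ext k; fin_cases k <;> simp [p0, p1, not_lt.mpr (le_of_lt p2)]
      rw [this]; rfl
  · have := mul_pos (mul_pos p0 p1) p2; linarith
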